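/- For any k ∈ ℤ and a,b ∈ ℂ, the linear map σ : W(a,b) → W(a+k,b) defined on basis elements by σ(L_m) = L_m and σ(I_m) = I_{m−k} is an isomorphism of Lie algebras. -/

import Mathlib

/-- A model of the Lie algebra `W(a,b)`: a complex Lie algebra with a basis
`{L m, I m | m : ℤ}` satisfying the defining bracket relations. -/
structure IsWab (a b : ℂ) (W : Type*) [LieRing W] [LieAlgebra ℂ W]
    (L I : ℤ → W) : Prop where
  bracket_LL : ∀ m n : ℤ, ⁅L m, L n⁆ = ((m - n : ℤ) : ℂ) • L (m + n)
  bracket_LI : ∀ m n : ℤ, ⁅L m, I n⁆ = (-((n : ℂ) + a + b * (m : ℂ))) • I (m + n)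
  bracket_II : ∀ m n : ℤ, ⁅I m, I n⁆ = 0
  basis : ∃ B : Module.Basis (ℤ ⊕ ℤ) ℂ W,
    (∀ m : ℤ, B (Sum.inl m) = L m) ∧ (∀ m : ℤ, B (Sum.inr m) = I m)


/-- For any `k : ℤ`, the map `L m ↦ L m`, `I m ↦ I (m - k)` gives an isomorphism
of Lie algebras `W(a,b) ≃ W(a+k,b)`. -/
theorem wab_shift_iso (a b : ℂ) (k : ℤ) {W W' : Type*}
    [LieRing W] [LieAlgebra ℂ W] [LieRing W'] [LieAlgebra ℂ W']
    (L I : ℤ → W) (L' I' : ℤ → W')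
    (h : IsWab a b W L I) (h' : IsWab (a + (k : ℂ)) b W' L' I') :
    ∃ σ : W ≃ₗ⁅ℂ⁆ W', (∀ m : ℤ, σ (L m) = L' m) ∧ (∀ m : ℤ, σ (I m) = I' (m - k)) := by
  obtain ⟨B, hBL, hBI⟩ := h.basis
  obtain ⟨B', hBL', hBI'⟩ := h'.basis
  -- index shuffle
  let e : (ℤ ⊕ ℤ) ≃ (ℤ ⊕ ℤ) :=
    { toFun := Sum.map id (· - k)
      invFun := Sum.map id (· + k)
      left_inv := by rintro (m | m) <;> simp
      right_inv := by rintro (m | m) <;> simp }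
  let f : W ≃ₗ[ℂ] W' := B.equiv B' e
  have hfL : ∀ m : ℤ, f (L m) = L' m := by
    intro m
    rw [← hBL m, show f (B (Sum.inl m)) = B' (e (Sum.inl m)) from B.equiv_apply _ _ _]
    simp [e, hBL']
  have hfI : ∀ m : ℤ, f (I m) = I' (m - k) := by
    intro m
    rw [← hBI m, show f (B (Sum.inr m)) = B' (e (Sum.inr m)) from B.equiv_apply _ _ _]
    simp [e, hBI']
  have key : ∀ x y : W, f ⁅x, y⁆ = ⁅f x, f y⁆ := by
    let g₁ : W →ₗ[ℂ] W →ₗ[ℂ] W' := LinearMap.mk₂ ℂ (fun x y => f ⁅x, y⁆)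
      (fun x x' y => by rw [add_lie, map_add])
      (fun c x y => by rw [smul_lie, map_smul])
      (fun x y y' => by rw [lie_add, map_add])
      (fun c x y => by rw [lie_smul, map_smul])
    let g₂ : W →ₗ[ℂ] W →ₗ[ℂ] W' := LinearMap.mk₂ ℂ (fun x y => ⁅f x, f y⁆)
      (fun x x' y => by rw [map_add, add_lie])
      (fun c x y => by rw [map_smul, smul_lie])
      (fun x y y' => by rw [map_add, lie_add])
      (fun c x y => by rw [map_smul, lie_smul])
    have : g₁ = g₂ := by
      apply B.ext; intro i
      apply B.ext; intro j
      obtain (m | m) := i <;> obtain (n | n) := j <;>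
        simp only [g₁, g₂, LinearMap.mk₂_apply, hBL, hBI]
      · rw [h.bracket_LL, map_smul, hfL, hfL, hfL, h'.bracket_LL]
      · rw [h.bracket_LI, map_smul, hfL, hfI, hfI, h'.bracket_LI,
          show m + n - k = m + (n - k) from by ring]
        congr 1
        push_cast
        ring
      · have e1 : (⁅I m, L n⁆ : W) = -⁅L n, I m⁆ := (lie_skew (I m) (L n)).symm
        have e2 : (⁅I' (m - k), L' n⁆ : W') = -⁅L' n, I' (m - k)⁆ :=
          (lie_skew (I' (m - k)) (L' n)).symm
        rw [e1, map_neg, h.bracket_LI, map_smul, hfI, hfI, hfL, e2, h'.bracket_LI,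
          show n + m - k = n + (m - k) from by ring]
        congr 2
        push_cast
        ring
      · rw [h.bracket_II, map_zero, hfI, hfI, h'.bracket_II]
    intro x y
    exact LinearMap.congr_fun (LinearMap.congr_fun this x) y
  exact ⟨{ f with map_lie' := key _ _ }, hfL, hfI⟩
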